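/- Suppose the framer error recursion e_{k+1} = |A − LC| e_k + Λ δ_λ satisfies ‖e_k‖₂ ≤ γ‖δ_λ‖₂ for all k, and the center-difference recursion δ^c_{k+1} = (A−LC)δ^c_k + L(y_k − y'_k) with δ^c_0 = 0 satisfies ‖δ^c_k‖₂ ≤ η‖y−y'‖_{ℓ∞} ≤ ηρ. Then for z_k ∈ [z̲_k, z̄_k] and z'_k ∈ [z̲'_k, z̄'_k] obtained from the framers via Γ, we have ‖z_k − z'_k‖₂ ≤ σ_max(|Γ|) γ ‖δ_λ‖₂ + σ_max(Γ) η ρ. -/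

import Mathlib

open Matrix

/-- Entrywise positive part of a matrix: `M⁺ = max(M, 0)`. -/
noncomputable def mpos {p m : ℕ} (A : Matrix (Fin p) (Fin m) ℝ) : Matrix (Fin p) (Fin m) ℝ :=
  fun i j => max (A i j) 0

/-- Entrywise negative part of a matrix: `M⁻ = M⁺ − M`. -/
noncomputable def mneg {p m : ℕ} (A : Matrix (Fin p) (Fin m) ℝ) : Matrix (Fin p) (Fin m) ℝ :=
  mpos A - A

/-- Entrywise absolute value of a matrix: `|M| = M⁺ + M⁻`. -/
noncomputable def matAbs {p m : ℕ} (A : Matrix (Fin p) (Fin m) ℝ) : Matrix (Fin p) (Fin m) ℝ :=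
  mpos A + mneg A

/-- The Euclidean norm on `Fin q → ℝ`. -/
noncomputable def norm2 {q : ℕ} (v : Fin q → ℝ) : ℝ :=
  Real.sqrt (∑ i, (v i) ^ 2)

lemma norm2_eq {q : ℕ} (v : Fin q → ℝ) :
    norm2 v = ‖(WithLp.equiv 2 (Fin q → ℝ)).symm v‖ := by
  rw [EuclideanSpace.norm_eq]
  simp [norm2, sq_abs]

lemma norm2_nonneg {q : ℕ} (v : Fin q → ℝ) : 0 ≤ norm2 v := Real.sqrt_nonneg _

lemma norm2_add_le {q : ℕ} (u v : Fin q → ℝ) : norm2 (u + v) ≤ norm2 u + norm2 v := by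
  simp only [norm2_eq]
  exact norm_add_le ((WithLp.equiv 2 (Fin q → ℝ)).symm u) ((WithLp.equiv 2 (Fin q → ℝ)).symm v)

lemma norm2_smul {q : ℕ} (c : ℝ) (v : Fin q → ℝ) : norm2 (c • v) = |c| * norm2 v := by
  simp only [norm2_eq]
  have : (WithLp.equiv 2 (Fin q → ℝ)).symm (c • v) = c • (WithLp.equiv 2 (Fin q → ℝ)).symm v := rfl
  rw [this, norm_smul, Real.norm_eq_abs]

lemma norm2_neg {q : ℕ} (v : Fin q → ℝ) : norm2 (-v) = norm2 v := by
  simp [norm2]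

lemma norm2_eq_zero {q : ℕ} {v : Fin q → ℝ} (h : norm2 v = 0) : v = 0 := by
  rw [norm2_eq, norm_eq_zero] at h
  exact congrArg (WithLp.equiv 2 (Fin q → ℝ)) h

lemma norm2_mono {q : ℕ} {u v : Fin q → ℝ} (h : ∀ i, |u i| ≤ v i) : norm2 u ≤ norm2 v := by
  apply Real.sqrt_le_sqrt
  apply Finset.sum_le_sum
  intro i _
  calc (u i)^2 = |u i|^2 := (sq_abs _).symm
  _ ≤ (v i)^2 := by
      apply pow_le_pow_left₀ (abs_nonneg _) (h i)

lemma opbound {q n : ℕ} (M : Matrix (Fin q) (Fin n) ℝ) (σ : ℝ)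
    (h : IsGreatest {c | ∃ x : Fin n → ℝ, norm2 x = 1 ∧ c = norm2 (M *ᵥ x)} σ)
    (v : Fin n → ℝ) : norm2 (M *ᵥ v) ≤ σ * norm2 v := by
  by_cases hv : norm2 v = 0
  · have : v = 0 := norm2_eq_zero hv
    subst this
    simp [hv, norm2, Matrix.mulVec_zero]
  · have hpos : 0 < norm2 v := lt_of_le_of_ne (norm2_nonneg v) (Ne.symm hv)
    have hx : norm2 ((norm2 v)⁻¹ • v) = 1 := by
      rw [norm2_smul, abs_of_pos (inv_pos.mpr hpos)]
      field_simp
    have hb : norm2 (M *ᵥ ((norm2 v)⁻¹ • v)) ≤ σ := h.2 ⟨_, hx, rfl⟩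
    rw [Matrix.mulVec_smul, norm2_smul, abs_of_pos (inv_pos.mpr hpos)] at hb
    calc norm2 (M *ᵥ v) = norm2 v * ((norm2 v)⁻¹ * norm2 (M *ᵥ v)) := by field_simp
    _ ≤ norm2 v * σ := mul_le_mul_of_nonneg_left hb hpos.le
    _ = σ * norm2 v := mul_comm _ _

lemma sigma_nonneg {q n : ℕ} (M : Matrix (Fin q) (Fin n) ℝ) (σ : ℝ)
    (h : IsGreatest {c | ∃ x : Fin n → ℝ, norm2 x = 1 ∧ c = norm2 (M *ᵥ x)} σ) : 0 ≤ σ := by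
  obtain ⟨x, -, hx⟩ := h.1
  rw [hx]; exact norm2_nonneg _

lemma key_id {q n : ℕ} (Γ : Matrix (Fin q) (Fin n) ℝ) (lo hi e : Fin n → ℝ)
    (h : hi - lo = e) :
    mpos Γ *ᵥ hi - mneg Γ *ᵥ lo - Γ *ᵥ ((lo + hi) / 2) = matAbs Γ *ᵥ ((2⁻¹ : ℝ) • e) ∧
    mpos Γ *ᵥ lo - mneg Γ *ᵥ hi - Γ *ᵥ ((lo + hi) / 2) = -(matAbs Γ *ᵥ ((2⁻¹ : ℝ) • e)) := by
  have hΓ : Γ = mpos Γ - mneg Γ := by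
    simp [mneg, sub_sub_cancel]
  have h1 : hi - (lo + hi) / 2 = (2⁻¹ : ℝ) • e := by
    funext i
    have := congrFun h i
    simp only [Pi.sub_apply] at this
    simp [Pi.smul_apply, Pi.div_apply, ← this]
    ring
  have h2 : (lo + hi) / 2 - lo = (2⁻¹ : ℝ) • e := by
    funext i
    have := congrFun h i
    simp only [Pi.sub_apply] at this
    simp [Pi.smul_apply, Pi.div_apply, ← this]
    ring
  constructor
  · calc mpos Γ *ᵥ hi - mneg Γ *ᵥ lo - Γ *ᵥ ((lo + hi) / 2)
        = mpos Γ *ᵥ hi - mneg Γ *ᵥ lo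
          - (mpos Γ *ᵥ ((lo + hi) / 2) - mneg Γ *ᵥ ((lo + hi) / 2)) := by
          rw [← Matrix.sub_mulVec, ← hΓ]
    _ = mpos Γ *ᵥ (hi - (lo + hi) / 2) + mneg Γ *ᵥ ((lo + hi) / 2 - lo) := by
          rw [Matrix.mulVec_sub, Matrix.mulVec_sub]; abel
    _ = matAbs Γ *ᵥ ((2⁻¹ : ℝ) • e) := by
          rw [h1, h2, matAbs, Matrix.add_mulVec]
  · calc mpos Γ *ᵥ lo - mneg Γ *ᵥ hi - Γ *ᵥ ((lo + hi) / 2)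
        = mpos Γ *ᵥ lo - mneg Γ *ᵥ hi
          - (mpos Γ *ᵥ ((lo + hi) / 2) - mneg Γ *ᵥ ((lo + hi) / 2)) := by
          rw [← Matrix.sub_mulVec, ← hΓ]
    _ = -(mpos Γ *ᵥ ((lo + hi) / 2 - lo) + mneg Γ *ᵥ (hi - (lo + hi) / 2)) := by
          rw [Matrix.mulVec_sub, Matrix.mulVec_sub]; abel
    _ = -(matAbs Γ *ᵥ ((2⁻¹ : ℝ) • e)) := by
          rw [h1, h2, matAbs, Matrix.add_mulVec]

lemma center_dist {q n : ℕ} (Γ : Matrix (Fin q) (Fin n) ℝ) (lo hi e : Fin n → ℝ)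
    (h : hi - lo = e) (z : Fin q → ℝ)
    (hz : mpos Γ *ᵥ lo - mneg Γ *ᵥ hi ≤ z ∧ z ≤ mpos Γ *ᵥ hi - mneg Γ *ᵥ lo) :
    norm2 (z - Γ *ᵥ ((lo + hi) / 2)) ≤ norm2 (matAbs Γ *ᵥ ((2⁻¹ : ℝ) • e)) := by
  obtain ⟨hu, hl⟩ := key_id Γ lo hi e h
  apply norm2_mono
  intro i
  rw [abs_le]
  have h1 := congrFun hu i
  have h2 := congrFun hl i
  have hzi1 := hz.1 i
  have hzi2 := hz.2 i
  simp only [Pi.sub_apply, Pi.neg_apply] at h1 h2 hzi1 hzi2 ⊢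
  constructor <;> linarith

theorem output_distance_bound {q n : ℕ}
    (Γ : Matrix (Fin q) (Fin n) ℝ)
    (σ₁ σ₂ γ η ρ nδ : ℝ)
    (hσ₁ : IsGreatest {c | ∃ x : Fin n → ℝ, norm2 x = 1 ∧ c = norm2 (matAbs Γ *ᵥ x)} σ₁)
    (hσ₂ : IsGreatest {c | ∃ x : Fin n → ℝ, norm2 x = 1 ∧ c = norm2 (Γ *ᵥ x)} σ₂)
    (xlo xhi xlo' xhi' : Fin n → ℝ) (e : Fin n → ℝ)
    (hwidth : xhi - xlo = e) (hwidth' : xhi' - xlo' = e)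
    (he : norm2 e ≤ γ * nδ)
    (hc : norm2 ((xlo + xhi) / 2 - (xlo' + xhi') / 2) ≤ η * ρ)
    (z z' : Fin q → ℝ)
    (hz : mpos Γ *ᵥ xlo - mneg Γ *ᵥ xhi ≤ z ∧ z ≤ mpos Γ *ᵥ xhi - mneg Γ *ᵥ xlo)
    (hz' : mpos Γ *ᵥ xlo' - mneg Γ *ᵥ xhi' ≤ z' ∧ z' ≤ mpos Γ *ᵥ xhi' - mneg Γ *ᵥ xlo') :
    norm2 (z - z') ≤ σ₁ * γ * nδ + σ₂ * η * ρ := by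
  set c := (xlo + xhi) / 2 with hcdef
  set c' := (xlo' + xhi') / 2 with hcdef'
  have hσ₁nn : 0 ≤ σ₁ := sigma_nonneg _ _ hσ₁
  have hσ₂nn : 0 ≤ σ₂ := sigma_nonneg _ _ hσ₂
  -- half-width bound
  have hw : norm2 (matAbs Γ *ᵥ ((2⁻¹ : ℝ) • e)) ≤ σ₁ * (2⁻¹ * norm2 e) := by
    have := opbound (matAbs Γ) σ₁ hσ₁ ((2⁻¹ : ℝ) • e)
    rwa [norm2_smul, abs_of_pos (by norm_num : (0:ℝ) < 2⁻¹)] at this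
  have h1 : norm2 (z - Γ *ᵥ c) ≤ σ₁ * (2⁻¹ * norm2 e) :=
    le_trans (center_dist Γ xlo xhi e hwidth z hz) hw
  have h2 : norm2 (z' - Γ *ᵥ c') ≤ σ₁ * (2⁻¹ * norm2 e) :=
    le_trans (center_dist Γ xlo' xhi' e hwidth' z' hz') hw
  have h3 : norm2 (Γ *ᵥ (c - c')) ≤ σ₂ * (η * ρ) := by
    calc norm2 (Γ *ᵥ (c - c')) ≤ σ₂ * norm2 (c - c') := opbound Γ σ₂ hσ₂ _
    _ ≤ σ₂ * (η * ρ) := mul_le_mul_of_nonneg_left hc hσ₂nn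
  have hdec : z - z' = (z - Γ *ᵥ c) + (-(z' - Γ *ᵥ c') + Γ *ᵥ (c - c')) := by
    rw [Matrix.mulVec_sub]; abel
  have htri : norm2 (z - z') ≤
      norm2 (z - Γ *ᵥ c) + (norm2 (z' - Γ *ᵥ c') + norm2 (Γ *ᵥ (c - c'))) := by
    rw [hdec]
    refine le_trans (norm2_add_le _ _) (add_le_add_right ?_ _)
    refine le_trans (norm2_add_le _ _) ?_
    rw [norm2_neg]
  have hse : σ₁ * norm2 e ≤ σ₁ * (γ * nδ) := mul_le_mul_of_nonneg_left he hσ₁nn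
  linarith
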